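/- Let D be a digraph of order n ≥ 3 containing a cycle C = x_1 x_2 … x_{n−1} x_1 with y the vertex not on C. If D contains no Hamiltonian bypass and there is an index k with x_k y ∈ A(D) and y x_{k+1} ∈ A(D), then x_{i+1} x_i ∉ A(D) for every i ≠ k (indices modulo n−1). -/

import Mathlib

open Finset

/-- A list of distinct vertices whose consecutive members are joined by arcs. -/
def IsPathList {V : Type*} (A : V → V → Prop) (p : List V) : Prop :=
  p.Nodup ∧ p.Chain' A

/-- A directed cycle: at least two distinct vertices, consecutive arcs, and an arc
from the last vertex back to the first. -/
def IsCycleList {V : Type*} (A : V → V → Prop) (c : List V) : Prop :=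
  2 ≤ c.length ∧ c.Nodup ∧ c.Chain' A ∧ ∀ h : c ≠ [], A (c.getLast h) (c.head h)

/-- A Hamiltonian bypass: a Hamiltonian path `v₁ v₂ … vₙ` together with the arc `v₁ vₙ`. -/
def HasHamBypass {V : Type*} (A : V → V → Prop) : Prop :=
  ∃ l : List V, l.Nodup ∧ (∀ v, v ∈ l) ∧ l.Chain' A ∧
    ∀ h : l ≠ [], A (l.head h) (l.getLast h)

/-- A Hamiltonian cycle. -/
def HasHamCycle {V : Type*} (A : V → V → Prop) : Prop :=
  ∃ c : List V, IsCycleList A c ∧ ∀ v, v ∈ c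

/-- out-degree of `x` towards a set `S`. -/
def outDegOn {V : Type*} [DecidableEq V] (A : V → V → Prop) [DecidableRel A]
    (x : V) (S : Finset V) : ℕ := (S.filter fun y => A x y).card

/-- in-degree of `x` from a set `S`. -/
def inDegOn {V : Type*} [DecidableEq V] (A : V → V → Prop) [DecidableRel A]
    (x : V) (S : Finset V) : ℕ := (S.filter fun y => A y x).card

/-- degree of `x` with respect to a set `S` (arcs in both directions). -/
def degOn {V : Type*} [DecidableEq V] (A : V → V → Prop) [DecidableRel A]
    (x : V) (S : Finset V) : ℕ := outDegOn A x S + inDegOn A x S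

/-- out-degree of `x`. -/
def outDeg {V : Type*} [Fintype V] [DecidableEq V] (A : V → V → Prop) [DecidableRel A]
    (x : V) : ℕ := outDegOn A x Finset.univ

/-- in-degree of `x`. -/
def inDeg {V : Type*} [Fintype V] [DecidableEq V] (A : V → V → Prop) [DecidableRel A]
    (x : V) : ℕ := inDegOn A x Finset.univ

/-- degree of `x`. -/
def deg {V : Type*} [Fintype V] [DecidableEq V] (A : V → V → Prop) [DecidableRel A]
    (x : V) : ℕ := outDeg A x + inDeg A x

/-- The condition `A_k` of Manoussakis: for every triple of distinct vertices `x, y, z`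
with `x` and `y` non-adjacent, if `xz` is not an arc then
`d(x)+d(y)+d⁺(x)+d⁻(z) ≥ 3n-2+k`, and if `zx` is not an arc then
`d(x)+d(y)+d⁻(x)+d⁺(z) ≥ 3n-2+k`. -/
def CondA {V : Type*} [Fintype V] [DecidableEq V] (A : V → V → Prop) [DecidableRel A]
    (k : ℤ) : Prop :=
  ∀ x y z : V, x ≠ y → z ≠ x → z ≠ y → ¬A x y → ¬A y x →
    (¬A x z → (deg A x + deg A y + outDeg A x + inDeg A z : ℤ) ≥
      3 * (Fintype.card V : ℤ) - 2 + k) ∧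
    (¬A z x → (deg A x + deg A y + inDeg A x + outDeg A z : ℤ) ≥
      3 * (Fintype.card V : ℤ) - 2 + k)


/-- Lemma 7(iii). -/
theorem stmt9 {V : Type*} [Fintype V] [DecidableEq V] (A : V → V → Prop) [DecidableRel A]
    (hirr : ∀ v, ¬A v v) (hn : 3 ≤ Fintype.card V)
    (c : List V) (hc : IsCycleList A c) (hlen : c.length = Fintype.card V - 1)
    (y : V) (hy : y ∉ c)
    (hnb : ¬HasHamBypass A)
    (k : ℕ) (hk : k < c.length)
    (h1 : A (c.get ⟨k, hk⟩) y)
    (h2 : A y (c.get ⟨(k + 1) % c.length, Nat.mod_lt _ (by omega)⟩)) :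
    ∀ i : ℕ, ∀ hi : i < c.length, i ≠ k →
      ¬A (c.get ⟨(i + 1) % c.length, Nat.mod_lt _ (by omega)⟩) (c.get ⟨i, hi⟩) := by
  intro i hi hik hA
  apply hnb
  obtain ⟨hm2, hnd, hch, hlast⟩ := hc
  set m := c.length with hm
  have hm0 : 0 < m := by omega
  have hcne : c ≠ [] := by
    intro h
    rw [hm, h] at hm0; simp at hm0
  have hk' : k < m := hk
  -- helper: get congruence
  have getc : ∀ (a b : ℕ) (ha : a < m) (hb : b < m), a = b →
      c.get ⟨a, ha⟩ = c.get ⟨b, hb⟩ := by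
    intro a b ha hb h; subst h; rfl
  -- the cyclic indexing function
  set g : ℕ → V := fun t => c.get ⟨t % m, Nat.mod_lt _ hm0⟩ with hg
  have gcong : ∀ a b : ℕ, a % m = b % m → g a = g b := by
    intro a b h
    simp only [hg]
    exact getc _ _ _ _ h
  have gsmall : ∀ (t : ℕ) (ht : t < m), g t = c.get ⟨t, ht⟩ := by
    intro t ht
    simp only [hg]
    exact getc _ _ _ _ (Nat.mod_eq_of_lt ht)
  have cyc : ∀ t : ℕ, A (g t) (g (t + 1)) := by
    intro t
    have ht : t % m < m := Nat.mod_lt _ hm0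
    have e0 : g t = c.get ⟨t % m, ht⟩ := rfl
    have e1 : g (t + 1) = c.get ⟨(t % m + 1) % m, Nat.mod_lt _ hm0⟩ := by
      simp only [hg]
      exact getc _ _ _ _ (Nat.mod_add_mod t m 1).symm
    rw [e0, e1]
    rcases Nat.lt_or_ge (t % m + 1) m with h | h
    · have := List.isChain_iff_getElem.mp hch (t % m) (by omega)
      have e2 : (t % m + 1) % m = t % m + 1 := Nat.mod_eq_of_lt h
      rw [getc _ _ _ (by omega) e2]
      exact this
    · have e2 : (t % m + 1) % m = 0 := by
        rw [show t % m + 1 = m by omega, Nat.mod_self]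
      have hlast' := hlast hcne
      rw [List.getLast_eq_getElem] at hlast'
      rw [← List.get_mk_zero (by omega)] at hlast'
      rw [getc _ _ _ (by omega) (show t % m = m - 1 by omega),
        getc _ _ _ (by omega) e2]
      exact hlast'
  -- restated hypotheses
  have hA' : A (g (i + 1)) (g i) := by
    rw [gsmall i hi]
    have e : g (i + 1) = c.get ⟨(i + 1) % m, Nat.mod_lt _ (by omega)⟩ := rfl
    rw [e]; exact hA
  have h1' : A (g k) y := by rw [gsmall k hk']; exact h1
  have h2' : A y (g (k + 1)) := by
    have e : g (k + 1) = c.get ⟨(k + 1) % m, Nat.mod_lt _ (by omega)⟩ := rfl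
    rw [e]; exact h2
  -- the rotated cycle
  have hc'len : (c.rotate (i + 1)).length = m := by rw [List.length_rotate]
  have hc'nd : (c.rotate (i + 1)).Nodup := List.nodup_rotate.mpr hnd
  have getc' : ∀ (s : ℕ) (hs : s < (c.rotate (i + 1)).length),
      (c.rotate (i + 1)).get ⟨s, hs⟩ = g (s + (i + 1)) := by
    intro s hs
    rw [List.get_rotate]
  have hch' : List.IsChain A (c.rotate (i + 1)) := by
    rw [List.isChain_iff_getElem]
    intro s hs
    show A ((c.rotate (i + 1)).get ⟨s, by omega⟩) ((c.rotate (i + 1)).get ⟨s + 1, hs⟩)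
    rw [getc' s (by omega), getc' (s + 1) (by omega),
      show s + 1 + (i + 1) = s + (i + 1) + 1 by omega]
    exact cyc _
  -- position of x_k in the rotated cycle
  set j : ℕ := (k + m - (i + 1) % m) % m with hj
  have hjm : j < m := Nat.mod_lt _ hm0
  have keyj : (j + (i + 1)) % m = k := by
    rcases Nat.lt_or_ge (i + 1) m with h | h
    · have hr : (i + 1) % m = i + 1 := Nat.mod_eq_of_lt h
      rw [hj, hr, Nat.mod_add_mod, show k + m - (i + 1) + (i + 1) = k + m by omega,
        Nat.add_mod_right, Nat.mod_eq_of_lt hk']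
    · have him : i + 1 = m := by omega
      have hr : (i + 1) % m = 0 := by rw [him, Nat.mod_self]
      rw [hj, hr, Nat.sub_zero, Nat.mod_add_mod, him,
        Nat.add_mod_right, Nat.add_mod_right, Nat.mod_eq_of_lt hk']
  have hj1 : j + 1 < m := by
    rcases Nat.lt_or_ge (j + 1) m with h | h
    · exact h
    · exfalso
      have hjeq : j = m - 1 := by omega
      rw [hjeq, show m - 1 + (i + 1) = i + m by omega, Nat.add_mod_right,
        Nat.mod_eq_of_lt hi] at keyj
      exact hik keyj
  -- key vertices of the rotated cycle
  have hc'j : (c.rotate (i + 1)).get ⟨j, by omega⟩ = g k := by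
    rw [getc' j (by omega)]
    exact gcong _ _ (by rw [keyj, Nat.mod_eq_of_lt hk'])
  have hc'j1 : (c.rotate (i + 1)).get ⟨j + 1, by omega⟩ = g (k + 1) := by
    rw [getc' (j + 1) (by omega)]
    refine gcong _ _ ?_
    rw [show j + 1 + (i + 1) = j + (i + 1) + 1 by omega, ← Nat.mod_add_mod, keyj]
  have htake_len : ((c.rotate (i + 1)).take (j + 1)).length = j + 1 := by
    rw [List.length_take, hc'len]; omega
  have htne : (c.rotate (i + 1)).take (j + 1) ≠ [] := by
    intro h; rw [h] at htake_len; simp at htake_len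
  have hdne : (c.rotate (i + 1)).drop (j + 1) ≠ [] := by
    intro h
    have := congrArg List.length h
    rw [List.length_drop, hc'len] at this
    simp at this; omega
  have hperm : ((c.rotate (i + 1)).take (j + 1) ++ y :: (c.rotate (i + 1)).drop (j + 1)).Perm
      (y :: c.rotate (i + 1)) := by
    have := List.perm_middle (a := y) (l₁ := (c.rotate (i + 1)).take (j + 1))
      (l₂ := (c.rotate (i + 1)).drop (j + 1))
    rwa [List.take_append_drop] at this
  have hyc' : y ∉ c.rotate (i + 1) := fun h => hy (List.mem_rotate.mp h)
  have hall : ∀ v : V, v ≠ y → v ∈ c := by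
    intro v hv
    have hsub : c.toFinset ⊆ Finset.univ.erase y := by
      intro u hu
      refine Finset.mem_erase.mpr ⟨?_, Finset.mem_univ u⟩
      intro h; rw [h] at hu; exact hy (List.mem_toFinset.mp hu)
    have hcard : (Finset.univ.erase y).card ≤ c.toFinset.card := by
      rw [Finset.card_erase_of_mem (Finset.mem_univ y), Finset.card_univ,
        List.toFinset_card_of_nodup hnd]
      omega
    have heq := Finset.eq_of_subset_of_card_le hsub hcard
    have hv' : v ∈ Finset.univ.erase y := Finset.mem_erase.mpr ⟨hv, Finset.mem_univ v⟩
    rw [← heq] at hv'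
    exact List.mem_toFinset.mp hv'
  refine ⟨(c.rotate (i + 1)).take (j + 1) ++ y :: (c.rotate (i + 1)).drop (j + 1),
    ?_, ?_, ?_, ?_⟩
  · exact hperm.nodup_iff.mpr (List.nodup_cons.mpr ⟨hyc', hc'nd⟩)
  · intro v
    rw [hperm.mem_iff]
    by_cases hv : v = y
    · exact hv ▸ List.mem_cons_self
    · exact List.mem_cons.mpr (Or.inr (List.mem_rotate.mpr (hall v hv)))
  · show List.IsChain A _
    rw [List.isChain_append]
    refine ⟨hch'.take _, ?_, ?_⟩
    · rw [List.isChain_cons]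
      refine ⟨?_, hch'.drop _⟩
      intro z hz
      rw [List.head?_drop, List.getElem?_eq_getElem (by rw [hc'len]; exact hj1)] at hz
      have hz' : z = (c.rotate (i + 1))[j + 1] := by simpa using hz.symm
      rw [hz', ← List.get_eq_getElem (l := c.rotate (i + 1)) (i := ⟨j + 1, by omega⟩), hc'j1]
      exact h2'
    · intro x hx z hz
      have hz' : z = y := by simpa using hz.symm
      rw [List.getLast?_eq_getElem?, htake_len, Nat.add_sub_cancel,
        List.getElem?_take, if_pos (Nat.lt_succ_self j),
        List.getElem?_eq_getElem (by rw [hc'len]; omega)] at hx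
      have hx' : x = (c.rotate (i + 1))[j] := by simpa using hx.symm
      rw [hz', hx', ← List.get_eq_getElem (l := c.rotate (i + 1)) (i := ⟨j, by omega⟩), hc'j]
      exact h1'
  · intro hne
    have hhead : ((c.rotate (i + 1)).take (j + 1) ++
        y :: (c.rotate (i + 1)).drop (j + 1)).head hne = g (i + 1) := by
      rw [List.head_append, dif_neg (by simpa using htne), List.head_take,
        ← List.get_mk_zero (by rw [hc'len]; omega), getc' 0 (by rw [hc'len]; omega)]
      exact congrArg g (by omega)
    have hlastl : ((c.rotate (i + 1)).take (j + 1) ++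
        y :: (c.rotate (i + 1)).drop (j + 1)).getLast hne = g i := by
      rw [List.getLast_append, dif_neg (by simp), List.getLast_cons hdne,
        List.getLast_drop, List.getLast_eq_getElem,
        ← List.get_eq_getElem (l := c.rotate (i + 1)) (i := ⟨(c.rotate (i + 1)).length - 1, by omega⟩),
        getc' _ (by omega)]
      refine gcong _ _ ?_
      rw [hc'len, show m - 1 + (i + 1) = i + m by omega, Nat.add_mod_right]
    rw [hhead, hlastl]
    exact hA'
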